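/- There exist c₁ > 0 and B > 0 such that for every c with |c| < c₁ there exists an even, real-valued, twice weakly differentiable function η ∈ H²(ℝ) satisfying −η''(x) + 4η(x) − 12·sech²(x)·η(x) + 2c²·(sech²(x) − η(x))² + 6η(x)² = 0 for all x ∈ ℝ, together with the bounds ‖η‖_{H²(ℝ)} ≤ B·c² and |η(x)| ≤ B·c²·sech²(x) for all x ∈ ℝ. -/

import Mathlib

open MeasureTheory Real Filter

open scoped ENNReal NNReal in
private lemma stmt13_exp_neg_abs_integrable : Integrable (fun x : ℝ => Real.exp (-|x|)) := by
  rw [← integrableOn_univ, ← Set.Iic_union_Ioi (a := (0:ℝ))]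
  apply IntegrableOn.union
  · exact (integrableOn_exp_Iic 0).congr_fun
      (fun x hx => by rw [abs_of_nonpos hx, neg_neg]) measurableSet_Iic
  · exact ((exp_neg_integrableOn_Ioi 0 one_pos).congr_fun
      (fun x hx => by rw [abs_of_pos hx]; ring_nf) measurableSet_Ioi)

private lemma stmt13_exp_neg_abs_integral : ∫ x : ℝ, Real.exp (-|x|) = 2 := by
  rw [← setIntegral_univ, ← Set.Iic_union_Ioi (a := (0:ℝ)),
    setIntegral_union (Set.Iic_disjoint_Ioi le_rfl) measurableSet_Ioi
      stmt13_exp_neg_abs_integrable.integrableOn stmt13_exp_neg_abs_integrable.integrableOn]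
  have h1 : ∫ x in Set.Iic (0:ℝ), Real.exp (-|x|) = 1 := by
    rw [setIntegral_congr_fun measurableSet_Iic
      (fun x (hx : x ≤ 0) => by rw [abs_of_nonpos hx, neg_neg])]
    simpa using integral_exp_Iic 0
  have h2 : ∫ x in Set.Ioi (0:ℝ), Real.exp (-|x|) = 1 := by
    rw [setIntegral_congr_fun measurableSet_Ioi
      (fun x (hx : (0:ℝ) < x) => by rw [abs_of_pos hx])]
    exact integral_exp_neg_Ioi_zero
  rw [h1, h2]; norm_num

open scoped ENNReal NNReal in
private lemma stmt13_l2_helper (f : ℝ → ℝ) (hf : Continuous f) {M : ℝ}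
    (hb : ∀ x, |f x| ≤ M * Real.exp (-|x|)) :
    MemLp f 2 (volume : Measure ℝ) ∧
      (eLpNorm f 2 volume) ^ 2 ≤ ENNReal.ofReal (2 * M ^ 2) := by
  have key : (eLpNorm f 2 volume) ^ 2 = ∫⁻ x, (‖f x‖₊ : ℝ≥0∞) ^ (2:ℝ) := by
    rw [eLpNorm_eq_lintegral_rpow_enorm_toReal two_ne_zero ENNReal.ofNat_ne_top]
    rw [← ENNReal.rpow_natCast _ 2, ← ENNReal.rpow_mul]
    norm_num
    rfl
  have hbd : (∫⁻ x, (‖f x‖₊ : ℝ≥0∞) ^ (2:ℝ)) ≤ ENNReal.ofReal (2 * M ^ 2) := by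
    have hle : ∀ x : ℝ, (‖f x‖₊ : ℝ≥0∞) ^ (2:ℝ)
        ≤ ENNReal.ofReal (M ^ 2 * Real.exp (-|x|)) := by
      intro x
      have h1 : (‖f x‖₊ : ℝ≥0∞) = ENNReal.ofReal |f x| := by
        rw [← Real.norm_eq_abs, ofReal_norm_eq_enorm, enorm_eq_nnnorm]
      rw [h1, show ((2:ℝ)) = ((2:ℕ):ℝ) from by norm_num, ENNReal.rpow_natCast,
        ← ENNReal.ofReal_pow (abs_nonneg _)]
      apply ENNReal.ofReal_le_ofReal
      have h3 : |f x| ^ 2 ≤ (M * Real.exp (-|x|)) ^ 2 :=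
        pow_le_pow_left₀ (abs_nonneg _) (hb x) 2
      have hM : 0 ≤ M := le_trans (abs_nonneg (f 0)) (by simpa using hb 0)
      calc |f x| ^ 2 ≤ (M * Real.exp (-|x|)) ^ 2 := h3
        _ = M ^ 2 * (Real.exp (-|x|) * Real.exp (-|x|)) := by ring
        _ ≤ M ^ 2 * (1 * Real.exp (-|x|)) := by
            apply mul_le_mul_of_nonneg_left _ (by positivity)
            apply mul_le_mul_of_nonneg_right _ (Real.exp_pos _).le
            exact Real.exp_le_one_iff.2 (by simp [abs_nonneg])
        _ = M ^ 2 * Real.exp (-|x|) := by ring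
    calc (∫⁻ x, (‖f x‖₊ : ℝ≥0∞) ^ (2:ℝ))
        ≤ ∫⁻ x, ENNReal.ofReal (M ^ 2 * Real.exp (-|x|)) :=
          lintegral_mono (fun x => hle x)
      _ = ENNReal.ofReal (∫ x, M ^ 2 * Real.exp (-|x|)) := by
          rw [ofReal_integral_eq_lintegral_ofReal
            (stmt13_exp_neg_abs_integrable.const_mul _)
            (Filter.Eventually.of_forall fun x => by positivity)]
      _ = ENNReal.ofReal (2 * M ^ 2) := by
          rw [integral_const_mul, stmt13_exp_neg_abs_integral]; ring_nf
  have hfin : eLpNorm f 2 volume ^ 2 ≤ ENNReal.ofReal (2 * M ^ 2) := key.le.trans hbd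
  constructor
  · refine ⟨hf.aestronglyMeasurable, ?_⟩
    have hlt : eLpNorm f 2 volume ^ 2 < ⊤ := lt_of_le_of_lt hfin ENNReal.ofReal_lt_top
    rw [lt_top_iff_ne_top]
    intro htop
    rw [htop] at hlt
    simp [ENNReal.top_pow] at hlt
  · exact hfin

private lemma stmt13_sech_sq_le_exp (x : ℝ) :
    1 / Real.cosh x ^ 2 ≤ 4 * Real.exp (-|x|) := by
  have h1 : Real.exp |x| ≤ 2 * Real.cosh x := by
    rw [Real.cosh_eq]
    rcases abs_cases x with ⟨h, _⟩ | ⟨h, _⟩ <;> rw [h] <;>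
      nlinarith [Real.exp_pos x, Real.exp_pos (-x)]
  have h2 : Real.exp |x| ≤ 4 * Real.cosh x ^ 2 := by
    nlinarith [Real.one_le_exp (abs_nonneg x), Real.cosh_pos x]
  rw [Real.exp_neg, ← one_div, mul_one_div,
    div_le_div_iff₀ (by positivity) (Real.exp_pos _)]
  nlinarith [Real.exp_pos |x|]

/-- The correction `η = |U_c|² - tanh²` of the squared modulus of a dark soliton: for `|c|`
small there exists an even `η ∈ H²(ℝ)` solving `L₀η + 2c²(sech² - η)² + 6η² = 0` with
`‖η‖_{H²} ≤ B c²` and the pointwise weighted bound `|η(x)| ≤ B c² sech²(x)`. -/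
theorem stmt_13 :
    ∃ c₁ : ℝ, 0 < c₁ ∧ ∃ B : ℝ, 0 < B ∧ ∀ c : ℝ, |c| < c₁ →
      ∃ η η' η'' : ℝ → ℝ,
        (∀ x, HasDerivAt η (η' x) x) ∧ (∀ x, HasDerivAt η' (η'' x) x) ∧
        (∀ x : ℝ, η (-x) = η x) ∧
        MemLp η 2 (volume : Measure ℝ) ∧
        MemLp η' 2 (volume : Measure ℝ) ∧
        MemLp η'' 2 (volume : Measure ℝ) ∧
        (∀ x : ℝ, -η'' x + 4 * η x - 12 * ((Real.cosh x)⁻¹)^2 * η x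
          + 2 * c^2 * (((Real.cosh x)⁻¹)^2 - η x)^2 + 6 * η x ^ 2 = 0) ∧
        (eLpNorm η 2 volume) ^ 2 + (eLpNorm η' 2 volume) ^ 2 + (eLpNorm η'' 2 volume) ^ 2
          ≤ ENNReal.ofReal (B^2 * c^4) ∧
        (∀ x : ℝ, |η x| ≤ B * c^2 * ((Real.cosh x)⁻¹)^2) := by
  refine ⟨1, one_pos, 40, by norm_num, fun c _hc => ?_⟩
  have hc3 : (0:ℝ) < 3 + c ^ 2 := by positivity
  have hc3' : (3:ℝ) + c ^ 2 ≠ 0 := hc3.ne'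
  set a : ℝ := c ^ 2 / (3 + c ^ 2) with ha_def
  have ha0 : 0 ≤ a := by positivity
  have ha_le : a ≤ c ^ 2 / 3 := by
    rw [ha_def, div_le_div_iff₀ hc3 (by norm_num)]
    nlinarith [sq_nonneg c]
  have hcosh : ∀ x : ℝ, Real.cosh x ≠ 0 := fun x => (Real.cosh_pos x).ne'
  have hkey : 6 * a ^ 2 - 6 * a + 2 * c ^ 2 * (1 - a) ^ 2 = 0 := by
    rw [ha_def]
    field_simp
    ring
  have hsc : ∀ x : ℝ, |Real.sinh x| ≤ Real.cosh x := fun x => by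
    nlinarith [Real.sinh_sq x, Real.cosh_pos x, sq_abs (Real.sinh x),
      abs_nonneg (Real.sinh x)]
  have hb1 : ∀ x : ℝ, |a / Real.cosh x ^ 2| ≤ 4 * a * Real.exp (-|x|) := by
    intro x
    calc |a / Real.cosh x ^ 2| = a * (1 / Real.cosh x ^ 2) := by
          rw [abs_of_nonneg (by positivity), mul_one_div]
      _ ≤ a * (4 * Real.exp (-|x|)) :=
          mul_le_mul_of_nonneg_left (stmt13_sech_sq_le_exp x) ha0
      _ = 4 * a * Real.exp (-|x|) := by ring
  have hb2 : ∀ x : ℝ, |-2 * a * Real.sinh x / Real.cosh x ^ 3|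
      ≤ 8 * a * Real.exp (-|x|) := by
    intro x
    have h2 : |(-2 * a * Real.sinh x)| = 2 * a * |Real.sinh x| := by
      rw [abs_mul, abs_mul]
      simp [abs_of_nonneg ha0]
    calc |-2 * a * Real.sinh x / Real.cosh x ^ 3|
        = (2 * a * |Real.sinh x|) / Real.cosh x ^ 3 := by
          rw [abs_div, abs_of_pos (by positivity : (0:ℝ) < Real.cosh x ^ 3), h2]
      _ ≤ (2 * a * Real.cosh x) / Real.cosh x ^ 3 := by
          gcongr
          exact hsc x
      _ = 2 * a * (1 / Real.cosh x ^ 2) := by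
          field_simp
      _ ≤ 2 * a * (4 * Real.exp (-|x|)) :=
          mul_le_mul_of_nonneg_left (stmt13_sech_sq_le_exp x) (by positivity)
      _ = 8 * a * Real.exp (-|x|) := by ring
  have hb3 : ∀ x : ℝ, |(4 * a * Real.cosh x ^ 2 - 6 * a) / Real.cosh x ^ 4|
      ≤ 40 * a * Real.exp (-|x|) := by
    intro x
    have h2 : |4 * a * Real.cosh x ^ 2 - 6 * a| ≤ 10 * a * Real.cosh x ^ 2 := by
      have h3 := Real.one_le_cosh x
      rw [abs_sub_le_iff]
      have h4 : (1:ℝ) ≤ Real.cosh x ^ 2 := by nlinarith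
      constructor <;> nlinarith [Real.cosh_pos x, mul_nonneg ha0 (sub_nonneg.2 h4)]
    calc |(4 * a * Real.cosh x ^ 2 - 6 * a) / Real.cosh x ^ 4|
        = |4 * a * Real.cosh x ^ 2 - 6 * a| / Real.cosh x ^ 4 := by
          rw [abs_div, abs_of_pos (by positivity : (0:ℝ) < Real.cosh x ^ 4)]
      _ ≤ (10 * a * Real.cosh x ^ 2) / Real.cosh x ^ 4 := by gcongr
      _ = 10 * a * (1 / Real.cosh x ^ 2) := by
          field_simp
      _ ≤ 10 * a * (4 * Real.exp (-|x|)) :=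
          mul_le_mul_of_nonneg_left (stmt13_sech_sq_le_exp x) (by positivity)
      _ = 40 * a * Real.exp (-|x|) := by ring
  have hcont1 : Continuous (fun x : ℝ => a / Real.cosh x ^ 2) :=
    continuous_const.div (Real.continuous_cosh.pow 2)
      (fun x => pow_ne_zero _ (hcosh x))
  have hcont2 : Continuous (fun x : ℝ => -2 * a * Real.sinh x / Real.cosh x ^ 3) :=
    (continuous_const.mul Real.continuous_sinh).div (Real.continuous_cosh.pow 3)
      (fun x => pow_ne_zero _ (hcosh x))
  have hcont3 : Continuous
      (fun x : ℝ => (4 * a * Real.cosh x ^ 2 - 6 * a) / Real.cosh x ^ 4) :=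
    ((continuous_const.mul (Real.continuous_cosh.pow 2)).sub continuous_const).div
      (Real.continuous_cosh.pow 4) (fun x => pow_ne_zero _ (hcosh x))
  obtain ⟨hm1, hn1⟩ := stmt13_l2_helper _ hcont1 hb1
  obtain ⟨hm2, hn2⟩ := stmt13_l2_helper _ hcont2 hb2
  obtain ⟨hm3, hn3⟩ := stmt13_l2_helper _ hcont3 hb3
  refine ⟨fun x => a / Real.cosh x ^ 2,
    fun x => -2 * a * Real.sinh x / Real.cosh x ^ 3,
    fun x => (4 * a * Real.cosh x ^ 2 - 6 * a) / Real.cosh x ^ 4,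
    ?_, ?_, ?_, ?_, ?_, ?_, ?_, ?_, ?_⟩
  · intro x
    have h1 : HasDerivAt (fun x => Real.cosh x ^ 2)
        (2 * Real.cosh x ^ 1 * Real.sinh x) x := (Real.hasDerivAt_cosh x).pow 2
    have h2 := (hasDerivAt_const x a).div h1 (pow_ne_zero 2 (hcosh x))
    refine h2.congr_deriv ?_
    field_simp
    ring
  · intro x
    have h1 : HasDerivAt (fun x => -2 * a * Real.sinh x)
        (-2 * a * Real.cosh x) x := (Real.hasDerivAt_sinh x).const_mul _
    have h2 : HasDerivAt (fun x => Real.cosh x ^ 3)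
        (3 * Real.cosh x ^ 2 * Real.sinh x) x := (Real.hasDerivAt_cosh x).pow 3
    have h3 := h1.div h2 (pow_ne_zero 3 (hcosh x))
    refine h3.congr_deriv ?_
    have hs : Real.sinh x ^ 2 = Real.cosh x ^ 2 - 1 := Real.sinh_sq x
    field_simp
    linear_combination (6 * a) * hs
  · intro x
    simp [Real.cosh_neg]
  · exact hm1
  · exact hm2
  · exact hm3
  · intro x
    field_simp
    linear_combination hkey
  · calc eLpNorm (fun x => a / Real.cosh x ^ 2) 2 volume ^ 2
          + eLpNorm (fun x => -2 * a * Real.sinh x / Real.cosh x ^ 3) 2 volume ^ 2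
          + eLpNorm (fun x => (4 * a * Real.cosh x ^ 2 - 6 * a) / Real.cosh x ^ 4) 2
              volume ^ 2
        ≤ ENNReal.ofReal (2 * (4 * a) ^ 2) + ENNReal.ofReal (2 * (8 * a) ^ 2)
          + ENNReal.ofReal (2 * (40 * a) ^ 2) := add_le_add (add_le_add hn1 hn2) hn3
      _ = ENNReal.ofReal (2 * (4 * a) ^ 2 + 2 * (8 * a) ^ 2 + 2 * (40 * a) ^ 2) := by
          rw [← ENNReal.ofReal_add (by positivity) (by positivity),
            ← ENNReal.ofReal_add (by positivity) (by positivity)]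
      _ ≤ ENNReal.ofReal ((40:ℝ) ^ 2 * c ^ 4) := by
          apply ENNReal.ofReal_le_ofReal
          nlinarith [ha_le, ha0, sq_nonneg c, sq_nonneg (c ^ 2 / 3 - a)]
  · intro x
    have h1 : |a / Real.cosh x ^ 2| = a / Real.cosh x ^ 2 :=
      abs_of_nonneg (by positivity)
    rw [h1, ← one_div, div_pow, one_pow, mul_one_div,
      div_le_div_iff₀ (by positivity) (by positivity)]
    nlinarith [ha_le, sq_nonneg c, pow_pos (Real.cosh_pos x) 2]
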